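/- Let R_a > 0, R ∈ (0, R_a), and let f : ℝ → ℝ be continuous with f(z) = 0 for all z ≥ R_a. Define P(z) := −∫_R^z f(y) dy and V(x̄) := Σ_{1 ≤ i < j ≤ n} P(‖x_i − x_j‖). Let x_1, …, x_n : [0, T) → ℝ² be differentiable curves with x_1(t), …, x_n(t) pairwise distinct for every t, satisfying ẋ_i(t) = Σ_{j ≠ i} f(‖x_i(t) − x_j(t)‖) · (x_i(t) − x_j(t))/‖x_i(t) − x_j(t)‖ for every i and t. Then t ↦ V(x̄(t)) is differentiable and d/dt V(x̄(t)) = − Σ_{i=1}^n ‖ẋ_i(t)‖² ≤ 0 for every t ∈ [0, T); in particular V is nonincreasing along solutions, and d/dt V(x̄(t)) = 0 if and only if ẋ_i(t) = 0 for all i. -/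

import Mathlib

open scoped RealInnerProductSpace

lemma sum_pairs_aux (n : ℕ) (a : Fin n → Fin n → ℝ) :
    ∑ i, ∑ j ∈ Finset.univ.filter (fun j => i < j), (a i j + a j i)
      = ∑ i, ∑ j ∈ Finset.univ.filter (fun j => j ≠ i), a i j := by
  have hsplit : ∀ i : Fin n, (Finset.univ.filter (fun j => j ≠ i))
      = (Finset.univ.filter (fun j => i < j)) ∪ (Finset.univ.filter (fun j => j < i)) := by
    intro i
    ext j
    simp only [Finset.mem_filter, Finset.mem_union, Finset.mem_univ, true_and]
    constructor
    · intro h; exact (Ne.lt_or_gt h.symm)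
    · rintro (h | h) <;> [exact (ne_of_gt h); exact (ne_of_lt h)]
  have hswap : ∑ i, ∑ j ∈ Finset.univ.filter (fun j => i < j), a j i
      = ∑ i, ∑ j ∈ Finset.univ.filter (fun j => j < i), a i j := by
    rw [Finset.sum_comm' (t' := Finset.univ)
      (s' := fun j => Finset.univ.filter (fun i => i < j))]
    intro i j
    simp [and_comm]
  calc ∑ i, ∑ j ∈ Finset.univ.filter (fun j => i < j), (a i j + a j i)
      = (∑ i, ∑ j ∈ Finset.univ.filter (fun j => i < j), a i j)
        + ∑ i, ∑ j ∈ Finset.univ.filter (fun j => i < j), a j i := by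
        rw [← Finset.sum_add_distrib]
        exact Finset.sum_congr rfl fun i _ => Finset.sum_add_distrib
    _ = ∑ i, (∑ j ∈ Finset.univ.filter (fun j => i < j), a i j
        + ∑ j ∈ Finset.univ.filter (fun j => j < i), a i j) := by
        rw [hswap, ← Finset.sum_add_distrib]
    _ = _ := by
        refine Finset.sum_congr rfl fun i _ => ?_
        rw [hsplit i, Finset.sum_union]
        rw [Finset.disjoint_filter]
        intro j _ h1 h2
        exact absurd h1 (not_lt_of_gt h2)

lemma hasDerivAt_norm_aux {F : Type*} [NormedAddCommGroup F] [InnerProductSpace ℝ F]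
    {g : ℝ → F} {g' : F} {t : ℝ} (hg : HasDerivAt g g' t) (h0 : g t ≠ 0) :
    HasDerivAt (fun s => ‖g s‖) (‖g t‖⁻¹ * ⟪g t, g'⟫) t := by
  have h1 : HasDerivAt (fun s => ‖g s‖ ^ 2) (2 * ⟪g t, g'⟫) t := hg.norm_sq
  have h2 := h1.sqrt (pow_ne_zero 2 (norm_ne_zero_iff.mpr h0))
  have he : (fun s => Real.sqrt (‖g s‖ ^ 2)) = fun s => ‖g s‖ := by
    funext s; rw [Real.sqrt_sq (norm_nonneg _)]
  rw [he] at h2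
  convert h2 using 1
  rw [Real.sqrt_sq (norm_nonneg _)]
  have : ‖g t‖ ≠ 0 := norm_ne_zero_iff.mpr h0
  field_simp

/-- Along solutions of the virtual-force dynamics, the total potential
`V(x̄) := Σ_{i<j} P(‖x_i − x_j‖)` is differentiable in time with
`d/dt V(x̄(t)) = −Σ_i ‖ẋ_i(t)‖² ≤ 0`; in particular `V` is nonincreasing along
solutions, and the derivative vanishes iff `ẋ_i(t) = 0` for all `i`. -/
theorem stmt_6 (n : ℕ) (Ra R T : ℝ) (hRa : 0 < Ra) (hR : R ∈ Set.Ioo 0 Ra)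
    (f : ℝ → ℝ) (hf : Continuous f) (hfvanish : ∀ z ≥ Ra, f z = 0)
    (P : ℝ → ℝ) (hP : ∀ z, P z = -∫ y in R..z, f y)
    (V : (Fin n → EuclideanSpace ℝ (Fin 2)) → ℝ)
    (hV : ∀ y, V y = ∑ i : Fin n,
      ∑ j ∈ Finset.univ.filter (fun j => i < j), P ‖y i - y j‖)
    (x : Fin n → ℝ → EuclideanSpace ℝ (Fin 2))
    (u : Fin n → ℝ → EuclideanSpace ℝ (Fin 2))
    (hu : ∀ i t, u i t = ∑ j ∈ Finset.univ.filter (fun j => j ≠ i),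
        f ‖x i t - x j t‖ • (‖x i t - x j t‖⁻¹ • (x i t - x j t)))
    (hdist : ∀ t ∈ Set.Ico (0 : ℝ) T, ∀ i j : Fin n, i ≠ j → x i t ≠ x j t)
    (hdyn : ∀ i : Fin n, ∀ t ∈ Set.Ico (0 : ℝ) T, HasDerivAt (x i) (u i t) t) :
    (∀ t ∈ Set.Ico (0 : ℝ) T,
      HasDerivAt (fun s => V (fun i => x i s)) (-∑ i : Fin n, ‖u i t‖ ^ 2) t ∧
      (-∑ i : Fin n, ‖u i t‖ ^ 2 ≤ 0) ∧
      ((-∑ i : Fin n, ‖u i t‖ ^ 2 = 0) ↔ ∀ i : Fin n, u i t = 0)) ∧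
    AntitoneOn (fun t => V (fun i => x i t)) (Set.Ico 0 T) := by
  have hPderiv : ∀ z : ℝ, HasDerivAt P (-(f z)) z := by
    intro z
    have h1 := (hf.integral_hasStrictDerivAt R z).hasDerivAt.neg
    have hPe : P = fun w => -∫ y in R..w, f y := funext hP
    rw [hPe]; exact h1
  have hfun : (fun s => V (fun i => x i s))
      = fun s => ∑ i : Fin n, ∑ j ∈ Finset.univ.filter (fun j => i < j),
          P ‖x i s - x j s‖ := by
    funext s; rw [hV]
  have hderiv : ∀ t ∈ Set.Ico (0 : ℝ) T,
      HasDerivAt (fun s => V (fun i => x i s)) (-∑ i : Fin n, ‖u i t‖ ^ 2) t := by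
    intro t ht
    have hpair : ∀ i j : Fin n, i ≠ j →
        HasDerivAt (fun s => P ‖x i s - x j s‖)
          (-(f ‖x i t - x j t‖) *
            (‖x i t - x j t‖⁻¹ * ⟪x i t - x j t, u i t - u j t⟫)) t := by
      intro i j hij
      have hx := hdist t ht i j hij
      have hr : HasDerivAt (fun s => x i s - x j s) (u i t - u j t) t :=
        (hdyn i t ht).sub (hdyn j t ht)
      have hn := hasDerivAt_norm_aux hr (sub_ne_zero.mpr hx)
      exact (hPderiv ‖x i t - x j t‖).comp t hn
    have hD : HasDerivAt
        (fun s => ∑ i : Fin n, ∑ j ∈ Finset.univ.filter (fun j => i < j),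
          P ‖x i s - x j s‖)
        (∑ i : Fin n, ∑ j ∈ Finset.univ.filter (fun j => i < j),
          -(f ‖x i t - x j t‖) *
            (‖x i t - x j t‖⁻¹ * ⟪x i t - x j t, u i t - u j t⟫)) t := by
      refine HasDerivAt.fun_sum fun i _ => HasDerivAt.fun_sum fun j hj => ?_
      exact hpair i j (ne_of_lt (Finset.mem_filter.mp hj).2)
    have hval : (∑ i : Fin n, ∑ j ∈ Finset.univ.filter (fun j => i < j),
          -(f ‖x i t - x j t‖) *
            (‖x i t - x j t‖⁻¹ * ⟪x i t - x j t, u i t - u j t⟫))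
        = -∑ i : Fin n, ‖u i t‖ ^ 2 := by
      set a : Fin n → Fin n → ℝ := fun i j =>
        f ‖x i t - x j t‖ * (‖x i t - x j t‖⁻¹ * ⟪x i t - x j t, u i t⟫) with ha
      have hDa : ∀ i j : Fin n,
          -(f ‖x i t - x j t‖) *
            (‖x i t - x j t‖⁻¹ * ⟪x i t - x j t, u i t - u j t⟫)
          = -(a i j + a j i) := by
        intro i j
        have h1 : x j t - x i t = -(x i t - x j t) := by abel
        simp only [ha, h1, inner_neg_left, inner_sub_right, norm_neg]
        ring
      calc (∑ i : Fin n, ∑ j ∈ Finset.univ.filter (fun j => i < j),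
            -(f ‖x i t - x j t‖) *
              (‖x i t - x j t‖⁻¹ * ⟪x i t - x j t, u i t - u j t⟫))
          = ∑ i : Fin n, ∑ j ∈ Finset.univ.filter (fun j => i < j),
              -(a i j + a j i) := by
            exact Finset.sum_congr rfl fun i _ =>
              Finset.sum_congr rfl fun j _ => hDa i j
        _ = -∑ i : Fin n, ∑ j ∈ Finset.univ.filter (fun j => i < j),
              (a i j + a j i) := by
            simp only [Finset.sum_neg_distrib]
        _ = -∑ i : Fin n, ∑ j ∈ Finset.univ.filter (fun j => j ≠ i), a i j := by
            rw [sum_pairs_aux]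
        _ = -∑ i : Fin n, ‖u i t‖ ^ 2 := by
            congr 1
            refine Finset.sum_congr rfl fun i _ => ?_
            rw [← real_inner_self_eq_norm_sq]
            nth_rewrite 1 [hu i t]
            rw [sum_inner]
            refine Finset.sum_congr rfl fun j hj => ?_
            rw [real_inner_smul_left, real_inner_smul_left]
    rw [hfun, ← hval]
    exact hD
  have hnonneg : ∀ t, (0:ℝ) ≤ ∑ i : Fin n, ‖u i t‖ ^ 2 := fun t =>
    Finset.sum_nonneg fun i _ => sq_nonneg _
  refine ⟨fun t ht => ⟨hderiv t ht, neg_nonpos.mpr (hnonneg t), ?_⟩, ?_⟩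
  · rw [neg_eq_zero, Finset.sum_eq_zero_iff_of_nonneg (fun i _ => sq_nonneg _)]
    constructor
    · intro h i
      exact norm_eq_zero.mp (sq_eq_zero_iff.mp (h i (Finset.mem_univ i)))
    · intro h i _
      rw [h i]; simp
  · apply antitoneOn_of_deriv_nonpos (convex_Ico 0 T)
    · intro t ht
      exact (hderiv t ht).continuousAt.continuousWithinAt
    · intro t ht
      rw [interior_Ico] at ht
      exact ((hderiv t (Set.Ioo_subset_Ico_self ht)).differentiableAt).differentiableWithinAt
    · intro t ht
      rw [interior_Ico] at ht
      rw [(hderiv t (Set.Ioo_subset_Ico_self ht)).deriv]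
      exact neg_nonpos.mpr (hnonneg t)
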